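/- Let b, c be regular residues modulo m and n, k ≥ 1. Then both b^n and b^k lie (mod m) in the orbit of c if and only if b^(gcd(n,k)) lies in the orbit of c. -/
import Mathlib


/-- `e` is an idempotent residue modulo `m`: `e^2 ≡ e (mod m)`. -/
def Idem (m : ℕ) (e : ZMod m) : Prop := e ^ 2 = e

/-- The order `|a|_m`: the least `n ≥ 1` such that `a^n` is idempotent mod `m`. -/
noncomputable def ord (m : ℕ) (a : ZMod m) : ℕ := sInf {n | 1 ≤ n ∧ Idem m (a ^ n)}

/-- `a` is regular modulo `m`: `a^(|a|_m + 1) ≡ a (mod m)`. -/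
noncomputable def Reg (m : ℕ) (a : ZMod m) : Prop := a ^ (ord m a + 1) = a

/-- `R_m^e`: the regular residues mod `m` whose idempotent power is `e`. -/
noncomputable def Rme (m : ℕ) (e : ZMod m) : Set (ZMod m) :=
  {a | Reg m a ∧ a ^ (ord m a) = e}

/-- The orbit of `a` modulo `m`: `{a^j mod m : 1 ≤ j ≤ |a|_m}`. -/
noncomputable def orb (m : ℕ) (a : ZMod m) : Finset (ZMod m) :=
  (Finset.Icc 1 (ord m a)).image (a ^ ·)

lemma exists_idem_pow (m : ℕ) (hm : 1 ≤ m) (a : ZMod m) : ∃ n, 1 ≤ n ∧ Idem m (a ^ n) := by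
  haveI : NeZero m := ⟨by omega⟩
  obtain ⟨i, j, hne, heq⟩ := Finite.exists_ne_map_eq_of_infinite (fun n : ℕ => a ^ n)
  wlog hij : i < j generalizing i j
  · exact this j i hne.symm heq.symm (by omega)
  set r := j - i with hr
  have hr1 : 1 ≤ r := by omega
  have hstep : ∀ s, i ≤ s → a ^ (s + r) = a ^ s := by
    intro s hs
    obtain ⟨t, rfl⟩ := Nat.exists_eq_add_of_le hs
    have h1 : a ^ i = a ^ (i + r) := by
      simp only [hr]
      rw [Nat.add_sub_cancel' (le_of_lt hij)]
      exact heq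
    calc a ^ (i + t + r) = a ^ (i + r) * a ^ t := by rw [← pow_add]; ring_nf
      _ = a ^ i * a ^ t := by rw [← h1]
      _ = a ^ (i + t) := by rw [← pow_add]
  have hmul : ∀ u s, i ≤ s → a ^ (s + u * r) = a ^ s := by
    intro u
    induction u with
    | zero => simp
    | succ u ih =>
      intro s hs
      have : s + (u + 1) * r = (s + r) + u * r := by ring
      rw [this, ih (s + r) (by omega), hstep s hs]
  refine ⟨r * (i + 1), by nlinarith, ?_⟩
  unfold Idem
  have h2 : (a ^ (r * (i + 1))) ^ 2 = a ^ (r * (i + 1) + (i + 1) * r) := by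
    rw [← pow_mul]; ring_nf
  rw [h2, hmul (i + 1) (r * (i + 1)) (by nlinarith)]

lemma ord_pos (m : ℕ) (hm : 1 ≤ m) (a : ZMod m) : 1 ≤ ord m a :=
  (Nat.sInf_mem (exists_idem_pow m hm a)).1

lemma reg_pow_add {m : ℕ} {b : ZMod m} (hb : Reg m b) :
    ∀ j, 1 ≤ j → b ^ (j + ord m b) = b ^ j := by
  intro j hj
  obtain ⟨t, rfl⟩ := Nat.exists_eq_add_of_le hj
  calc b ^ (1 + t + ord m b) = b ^ (ord m b + 1) * b ^ t := by rw [← pow_add]; ring_nf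
    _ = b * b ^ t := by rw [hb]
    _ = b ^ (1 + t) := by rw [pow_add, pow_one]

lemma reg_pow_add_mul {m : ℕ} {b : ZMod m} (hb : Reg m b) :
    ∀ u j, 1 ≤ j → b ^ (j + u * ord m b) = b ^ j := by
  intro u
  induction u with
  | zero => simp
  | succ u ih =>
    intro j hj
    have : j + (u + 1) * ord m b = (j + ord m b) + u * ord m b := by ring
    rw [this, ih (j + ord m b) (by omega), reg_pow_add hb j hj]

lemma reg_pow_mul_ord {m : ℕ} (hm : 1 ≤ m) {b : ZMod m} (hb : Reg m b) :
    ∀ t, 1 ≤ t → b ^ (t * ord m b) = b ^ (ord m b) := by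
  intro t ht
  obtain ⟨u, rfl⟩ := Nat.exists_eq_add_of_le ht
  have : (1 + u) * ord m b = ord m b + u * ord m b := by ring
  rw [this, reg_pow_add_mul hb u (ord m b) (ord_pos m hm b)]

lemma mem_orb_iff {m : ℕ} (hm : 1 ≤ m) {c : ZMod m} (hc : Reg m c) (x : ZMod m) :
    x ∈ orb m c ↔ ∃ j, 1 ≤ j ∧ c ^ j = x := by
  unfold orb
  simp only [Finset.mem_image, Finset.mem_Icc]
  constructor
  · rintro ⟨j, ⟨h1, _⟩, rfl⟩; exact ⟨j, h1, rfl⟩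
  · rintro ⟨j, h1, rfl⟩
    have hred : ∀ j, 1 ≤ j → ∃ j', (1 ≤ j' ∧ j' ≤ ord m c) ∧ c ^ j' = c ^ j := by
      intro j
      induction j using Nat.strong_induction_on with
      | _ j ih =>
        intro hj
        by_cases h : j ≤ ord m c
        · exact ⟨j, ⟨hj, h⟩, rfl⟩
        · push_neg at h
          have hop := ord_pos m hm c
          obtain ⟨j', hj', he⟩ := ih (j - ord m c) (by omega) (by omega)
          refine ⟨j', hj', ?_⟩
          rw [he]
          have h2 := reg_pow_add hc (j - ord m c) (by omega)
          rw [← h2, Nat.sub_add_cancel (by omega)]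
    obtain ⟨j', hj', he⟩ := hred j h1
    exact ⟨j', hj', he⟩

lemma bezout_pos (n k : ℕ) (hn : 1 ≤ n) (hk : 1 ≤ k) :
    ∃ u v : ℕ, 1 ≤ u ∧ 1 ≤ v ∧ u * n = Nat.gcd n k + v * k := by
  have h := Nat.gcd_eq_gcd_ab n k
  set A := Nat.gcdA n k with hA
  set B := Nat.gcdB n k with hB
  set t : ℤ := |A| + |B| + 1 with ht
  have ht1 : 1 ≤ t := by have := abs_nonneg A; have := abs_nonneg B; omega
  have hu : 1 ≤ A + t * (k : ℤ) := by
    have h1 : -|A| ≤ A := neg_abs_le A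
    have h2 : t * 1 ≤ t * (k : ℤ) := by
      apply mul_le_mul_of_nonneg_left _ (by omega)
      exact_mod_cast hk
    have := abs_nonneg B
    omega
  have hv : 1 ≤ t * (n : ℤ) - B := by
    have h1 : B ≤ |B| := le_abs_self B
    have h2 : t * 1 ≤ t * (n : ℤ) := by
      apply mul_le_mul_of_nonneg_left _ (by omega)
      exact_mod_cast hn
    have := abs_nonneg A
    omega
  refine ⟨(A + t * k).toNat, (t * n - B).toNat, ?_, ?_, ?_⟩
  · omega
  · omega
  · have heq : (A + t * (k:ℤ)) * n = Nat.gcd n k + (t * n - B) * k := by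
      rw [h]; ring
    zify
    rw [Int.toNat_of_nonneg (by omega), Int.toNat_of_nonneg (by omega)]
    exact heq

/-- For regular `b, c` mod `m` and `n, k ≥ 1`: both `b^n` and `b^k` lie in the
orbit of `c` iff `b^(gcd(n,k))` does. -/
theorem pow_mem_orb_gcd (m : ℕ) (hm : 1 ≤ m) (b c : ZMod m) (hb : Reg m b)
    (hc : Reg m c) (n k : ℕ) (hn : 1 ≤ n) (hk : 1 ≤ k) :
    (b ^ n ∈ orb m c ∧ b ^ k ∈ orb m c) ↔ b ^ (Nat.gcd n k) ∈ orb m c := by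
  set g := Nat.gcd n k with hgdef
  have hg : 1 ≤ g := Nat.gcd_pos_of_pos_left k hn
  constructor
  · rintro ⟨h1, h2⟩
    obtain ⟨i, hi1, hi2⟩ := (mem_orb_iff hm hc _).1 h1
    obtain ⟨j, hj1, hj2⟩ := (mem_orb_iff hm hc _).1 h2
    obtain ⟨u, v, hu, hv, huv⟩ := bezout_pos n k hn hk
    set d := ord m b with hd
    set r := ord m c with hr
    have hd1 : 1 ≤ d := ord_pos m hm b
    have hr1 : 1 ≤ r := ord_pos m hm c
    -- e_c absorbs positive powers of c
    have hec : ∀ s, 1 ≤ s → c ^ s * c ^ r = c ^ s := by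
      intro s hs
      rw [← pow_add]
      exact reg_pow_add hc s hs
    -- e_b = c^(i*d)
    have heb : b ^ d = c ^ (i * d) := by
      have h3 : b ^ (n * d) = b ^ d := by
        rw [mul_comm]
        have := reg_pow_add_mul hb n d hd1
        calc b ^ (d * n) = b ^ (d * n) := rfl
          _ = b ^ d := by
            obtain ⟨n', rfl⟩ := Nat.exists_eq_add_of_le hn
            have : d * (1 + n') = d + n' * d := by ring
            rw [this, reg_pow_add_mul hb n' d hd1]
      rw [← h3, pow_mul, ← hi2, ← pow_mul]
    -- b^g * e_c = b^g
    have hkey : b ^ g * c ^ r = b ^ g := by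
      have h4 : b ^ g * b ^ d = b ^ g := by
        rw [← pow_add]; exact reg_pow_add hb g hg
      calc b ^ g * c ^ r = b ^ g * b ^ d * c ^ r := by rw [h4]
        _ = b ^ g * (c ^ (i * d) * c ^ r) := by rw [heb, mul_assoc]
        _ = b ^ g * c ^ (i * d) := by rw [hec (i * d) (by nlinarith)]
        _ = b ^ g * b ^ d := by rw [heb]
        _ = b ^ g := h4
    -- inverse of c^(j*v) : c^w with j*v + w = (j*v+1)*r
    set w := j * v * (r - 1) + r with hw
    have hw1 : 1 ≤ w := by omega
    have hjvw : j * v + w = (j * v + 1) * r := by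
      obtain ⟨r', hr'⟩ := Nat.exists_eq_add_of_le hr1
      simp only [hw]
      rw [hr', Nat.add_sub_cancel_left]
      ring
    have hinv : c ^ (j * v) * c ^ w = c ^ r := by
      rw [← pow_add, hjvw, reg_pow_mul_ord hm hc (j * v + 1) (by nlinarith)]
    -- main computation
    have hfinal : c ^ (i * u + w) = b ^ g := by
      have h5 : b ^ (u * n) = c ^ (i * u) := by
        rw [mul_comm, pow_mul, ← hi2, ← pow_mul]
      have h6 : b ^ (u * n) = b ^ g * c ^ (j * v) := by
        rw [huv, pow_add]
        congr 1
        rw [mul_comm, pow_mul, ← hj2, ← pow_mul]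
      calc c ^ (i * u + w) = b ^ (u * n) * c ^ w := by rw [h5, pow_add]
        _ = b ^ g * (c ^ (j * v) * c ^ w) := by rw [h6, mul_assoc]
        _ = b ^ g * c ^ r := by rw [hinv]
        _ = b ^ g := hkey
    exact (mem_orb_iff hm hc _).2 ⟨i * u + w, by nlinarith, hfinal⟩
  · intro h
    obtain ⟨j, hj1, hj2⟩ := (mem_orb_iff hm hc _).1 h
    have hmem : ∀ s, 1 ≤ s → g ∣ s → b ^ s ∈ orb m c := by
      rintro s hs ⟨t, rfl⟩
      have ht : 1 ≤ t := Nat.pos_of_ne_zero (by rintro rfl; simp at hs)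
      refine (mem_orb_iff hm hc _).2 ⟨j * t, by nlinarith, ?_⟩
      rw [pow_mul, hj2, ← pow_mul]
    exact ⟨hmem n hn (Nat.gcd_dvd_left n k), hmem k hk (Nat.gcd_dvd_right n k)⟩
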